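/- In a polymatroid P_{ρ,d} defined by submodular f̂, the amount δ_i = sup{x_i ≥ 0 : P^i_{ρ,d}(x_i) = P^i_{ρ,d}(0)} equals (max_{x ∈ P_{ρ,d}} 𝟙ᵗx) − (max_{x ∈ P_{ρ,d}} 𝟙_{−i}ᵗ x_{−i}), i.e. the difference between the maximum total allocation and the maximum total allocation to players other than i. -/
import Mathlib

open Finset

lemma polymatroid_max (n : ℕ) (g : Finset (Fin n) → ℝ)
    (hsub : ∀ S T, g (S ∪ T) + g (S ∩ T) ≤ g S + g T)
    (hg0 : g ∅ = 0) (hgnn : ∀ S, 0 ≤ g S)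
    (d : Fin n → ℝ) (hd : ∀ j, 0 ≤ d j) :
    ∃ x : Fin n → ℝ, ((∀ j, 0 ≤ x j) ∧ (∀ j, x j ≤ d j) ∧ ∀ S, ∑ j ∈ S, x j ≤ g S) ∧
      (∀ y : Fin n → ℝ, ((∀ j, 0 ≤ y j) ∧ (∀ j, y j ≤ d j) ∧ ∀ S, ∑ j ∈ S, y j ≤ g S) →
        ∑ j, y j ≤ ∑ j, x j) ∧
      ∃ T : Finset (Fin n), ∑ j, x j = g T + ∑ j ∈ Tᶜ, d j := by
  classical
  set K : Set (Fin n → ℝ) :=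
    {x | (∀ j, 0 ≤ x j) ∧ (∀ j, x j ≤ d j) ∧ ∀ S, ∑ j ∈ S, x j ≤ g S} with hK
  have hKc : IsCompact K := by
    have h1 : K = Set.Icc (0 : Fin n → ℝ) d ∩ ⋂ S, {x | ∑ j ∈ S, x j ≤ g S} := by
      ext x
      simp only [hK, Set.mem_setOf_eq, Set.mem_inter_iff, Set.mem_Icc, Set.mem_iInter,
        Pi.le_def, Pi.zero_apply]
      tauto
    rw [h1]
    exact isCompact_Icc.inter_right (isClosed_iInter fun S =>
      isClosed_le (continuous_finset_sum S fun j _ => continuous_apply j) continuous_const)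
  have hKne : (0 : Fin n → ℝ) ∈ K := by
    refine ⟨fun j => le_rfl, fun j => hd j, fun S => ?_⟩
    simp [hgnn S]
  obtain ⟨x, hxK, hmax⟩ := hKc.exists_isMaxOn ⟨0, hKne⟩
    ((continuous_finset_sum univ fun j _ => continuous_apply j).continuousOn)
  have hmax' : ∀ y ∈ K, ∑ j, y j ≤ ∑ j, x j := fun y hy => hmax hy
  obtain ⟨hx0, hxd, hxg⟩ := hxK
  set Tight : Finset (Fin n) → Prop := fun S => ∑ j ∈ S, x j = g S with hTight
  have hTemp : Tight ∅ := by simp [hTight, hg0]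
  have hTun : ∀ S, Tight S → ∀ T, Tight T → Tight (S ∪ T) := by
    intro S hS T hT
    have h1 := hsub S T
    have h2 := hxg (S ∪ T)
    have h3 := hxg (S ∩ T)
    have h4 : ∑ j ∈ S ∪ T, x j + ∑ j ∈ S ∩ T, x j = ∑ j ∈ S, x j + ∑ j ∈ T, x j :=
      Finset.sum_union_inter
    simp only [hTight] at hS hT ⊢
    linarith
  set U : Finset (Fin n) := (Finset.univ.filter Tight).sup id with hU
  have hUt : Tight U := by
    refine Finset.sup_induction hTemp hTun ?_
    intro S hS
    exact (Finset.mem_filter.mp hS).2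
  have hmemU : ∀ j (S : Finset (Fin n)), Tight S → j ∈ S → j ∈ U := by
    intro j S hS hjS
    have : S ≤ U := Finset.le_sup (f := id) (Finset.mem_filter.mpr ⟨Finset.mem_univ S, hS⟩)
    exact this hjS
  have hblocked : ∀ j ∉ U, x j = d j := by
    intro j hjU
    by_contra hne
    have hlt : x j < d j := lt_of_le_of_ne (hxd j) hne
    have hslack : ∀ S, j ∈ S → ∑ k ∈ S, x k < g S := by
      intro S hjS
      refine lt_of_le_of_ne (hxg S) fun h => hjU (hmemU j S h hjS)
    set F := Finset.univ.filter (fun S : Finset (Fin n) => j ∈ S) with hF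
    have hFne : F.Nonempty := ⟨{j}, by simp [hF]⟩
    set ε : ℝ := min (d j - x j) (F.inf' hFne (fun S => g S - ∑ k ∈ S, x k)) with hε
    have hεpos : 0 < ε := by
      refine lt_min (by linarith) ?_
      rw [Finset.lt_inf'_iff]
      intro S hS
      have := hslack S (by simpa [hF] using hS)
      linarith
    set y : Fin n → ℝ := Function.update x j (x j + ε) with hy
    have hyK : y ∈ K := by
      refine ⟨fun k => ?_, fun k => ?_, fun S => ?_⟩
      · rcases eq_or_ne k j with rfl | hkj
        · simp [hy]; nlinarith [hx0 k]
        · simp [hy, Function.update_of_ne hkj]; exact hx0 k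
      · rcases eq_or_ne k j with rfl | hkj
        · have : ε ≤ d k - x k := min_le_left _ _
          simp [hy]; linarith
        · simp [hy, Function.update_of_ne hkj]; exact hxd k
      · rcases Finset.decidableMem j S with hjS | hjS
        · have hsum : ∑ k ∈ S, y k = ∑ k ∈ S, x k := by
            refine Finset.sum_congr rfl fun k hk => ?_
            have : k ≠ j := fun h => hjS (h ▸ hk)
            simp [hy, Function.update_of_ne this]
          rw [hsum]; exact hxg S
        · have hsum : ∑ k ∈ S, y k = (x j + ε) + ∑ k ∈ S.erase j, x k := by
            rw [hy, Finset.sum_update_of_mem hjS, ← Finset.erase_eq]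
          have hsum2 : x j + ∑ k ∈ S.erase j, x k = ∑ k ∈ S, x k :=
            Finset.add_sum_erase S x hjS
          have hεle : ε ≤ g S - ∑ k ∈ S, x k := by
            refine le_trans (min_le_right _ _) (Finset.inf'_le _ ?_)
            simp [hF, hjS]
          linarith
    have := hmax' y hyK
    have hsumy : ∑ k, y k = ε + ∑ k, x k := by
      rw [hy, Finset.sum_update_of_mem (Finset.mem_univ j), ← Finset.erase_eq]
      rw [← Finset.add_sum_erase Finset.univ x (Finset.mem_univ j)]
      ring
    linarith
  refine ⟨x, ⟨hx0, hxd, hxg⟩, hmax', U, ?_⟩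
  have h1 : ∑ j ∈ U, x j + ∑ j ∈ Uᶜ, x j = ∑ j, x j := Finset.sum_add_sum_compl U x
  have h2 : ∑ j ∈ Uᶜ, x j = ∑ j ∈ Uᶜ, d j :=
    Finset.sum_congr rfl fun j hj => hblocked j (Finset.mem_compl.mp hj)
  have h3 : ∑ j ∈ U, x j = g U := hUt
  linarith

theorem clinch_amount_formula (n : ℕ) (f : Finset (Fin n) → ℝ)
    (hmono : ∀ S T : Finset (Fin n), S ⊆ T → f S ≤ f T)
    (hsub : ∀ S T : Finset (Fin n), f (S ∪ T) + f (S ∩ T) ≤ f S + f T)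
    (hf0 : f ∅ = 0)
    (ρ : Fin n → ℝ) (hρ0 : ∀ i, 0 ≤ ρ i)
    (hρP : ∀ S : Finset (Fin n), ∑ i ∈ S, ρ i ≤ f S)
    (d : Fin n → ℝ) (hd : ∀ i, 0 ≤ d i)
    (i : Fin n)
    (Prd : Set (Fin n → ℝ))
    (hPrd : Prd = {x | (∀ j, 0 ≤ x j) ∧ (∀ j, x j ≤ d j) ∧
        ∀ S : Finset (Fin n), ∑ j ∈ S, (ρ j + x j) ≤ f S}) :
    sSup {a : ℝ | 0 ≤ a ∧
        {y : Fin n → ℝ | Function.update y i a ∈ Prd}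
          = {y : Fin n → ℝ | Function.update y i 0 ∈ Prd}}
      = sSup {s : ℝ | ∃ x ∈ Prd, s = ∑ j, x j}
        - sSup {s : ℝ | ∃ x ∈ Prd, s = ∑ j ∈ Finset.univ.erase i, x j} := by
  classical
  subst hPrd
  set Prd : Set (Fin n → ℝ) := {x | (∀ j, 0 ≤ x j) ∧ (∀ j, x j ≤ d j) ∧
      ∀ S : Finset (Fin n), ∑ j ∈ S, (ρ j + x j) ≤ f S} with hPrd
  -- reduced submodular function
  set g : Finset (Fin n) → ℝ := fun S => f S - ∑ j ∈ S, ρ j with hg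
  have hgsub : ∀ S T, g (S ∪ T) + g (S ∩ T) ≤ g S + g T := by
    intro S T
    have h1 := hsub S T
    have h2 : ∑ j ∈ S ∪ T, ρ j + ∑ j ∈ S ∩ T, ρ j = ∑ j ∈ S, ρ j + ∑ j ∈ T, ρ j :=
      Finset.sum_union_inter
    simp only [hg]; linarith
  have hg0 : g ∅ = 0 := by simp [hg, hf0]
  have hgnn : ∀ S, 0 ≤ g S := fun S => by simp only [hg]; linarith [hρP S]
  -- membership in Prd in terms of g
  have hPrd_iff : ∀ z : Fin n → ℝ, z ∈ Prd ↔
      ((∀ j, 0 ≤ z j) ∧ (∀ j, z j ≤ d j) ∧ ∀ S, ∑ j ∈ S, z j ≤ g S) := by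
    intro z
    simp only [hPrd, Set.mem_setOf_eq, hg]
    constructor
    · rintro ⟨h1, h2, h3⟩
      refine ⟨h1, h2, fun S => ?_⟩
      have := h3 S
      rw [Finset.sum_add_distrib] at this
      linarith
    · rintro ⟨h1, h2, h3⟩
      refine ⟨h1, h2, fun S => ?_⟩
      have := h3 S
      rw [Finset.sum_add_distrib]
      linarith
  set d' : Fin n → ℝ := Function.update d i 0 with hd'def
  have hd' : ∀ j, 0 ≤ d' j := by
    intro j
    rcases eq_or_ne j i with rfl | hji
    · simp [hd'def]
    · simp [hd'def, Function.update_of_ne hji]; exact hd j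
  have hd'le : ∀ j, d' j ≤ d j := by
    intro j
    rcases eq_or_ne j i with rfl | hji
    · simp [hd'def]; exact hd j
    · simp [hd'def, Function.update_of_ne hji]
  obtain ⟨xs, ⟨hxs0, hxsd', hxsg⟩, hmaxQ, T, hTval⟩ :=
    polymatroid_max n g hgsub hg0 hgnn d' hd'
  have hxsPrd : xs ∈ Prd :=
    (hPrd_iff xs).mpr ⟨hxs0, fun j => le_trans (hxsd' j) (hd'le j), hxsg⟩
  have hxsi : xs i = 0 := by
    have h1 := hxsd' i
    have h2 := hxs0 i
    rw [hd'def] at h1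
    simp at h1
    linarith
  set S₁ : Set ℝ := {s | ∃ x ∈ Prd, s = ∑ j, x j} with hS₁
  set S₂ : Set ℝ := {s | ∃ x ∈ Prd, s = ∑ j ∈ Finset.univ.erase i, x j} with hS₂
  have h0Prd : (0 : Fin n → ℝ) ∈ Prd := by
    refine (hPrd_iff 0).mpr ⟨fun j => le_rfl, fun j => hd j, fun S => ?_⟩
    simp [hgnn S]
  have hS₁ne : S₁.Nonempty := ⟨0, 0, h0Prd, by simp⟩
  have hS₂ne : S₂.Nonempty := ⟨0, 0, h0Prd, by simp⟩
  have hS₁bdd : BddAbove S₁ := by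
    refine ⟨f Finset.univ - ∑ j, ρ j, ?_⟩
    rintro s ⟨x, hx, rfl⟩
    have := ((hPrd_iff x).mp hx).2.2 Finset.univ
    simp only [hg] at this
    linarith
  -- erase-sum facts
  have herase : ∀ x : Fin n → ℝ, x i + ∑ j ∈ Finset.univ.erase i, x j = ∑ j, x j :=
    fun x => Finset.add_sum_erase Finset.univ x (Finset.mem_univ i)
  -- elements of S₂ lie in S₁ (by zeroing coordinate i)
  have hupd0 : ∀ x ∈ Prd, Function.update x i 0 ∈ Prd ∧
      (∀ j, Function.update x i 0 j ≤ d' j) ∧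
      ∑ j, Function.update x i 0 j = ∑ j ∈ Finset.univ.erase i, x j := by
    intro x hx
    obtain ⟨h1, h2, h3⟩ := (hPrd_iff x).mp hx
    have hle : ∀ j, Function.update x i 0 j ≤ x j := by
      intro j
      rcases eq_or_ne j i with rfl | hji
      · simp [h1 j]
      · simp [Function.update_of_ne hji]
    have h0le : ∀ j, 0 ≤ Function.update x i 0 j := by
      intro j
      rcases eq_or_ne j i with rfl | hji
      · simp
      · simp [Function.update_of_ne hji]; exact h1 j
    have hled' : ∀ j, Function.update x i 0 j ≤ d' j := by
      intro j
      rcases eq_or_ne j i with rfl | hji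
      · simp [hd'def]
      · simp [hd'def, Function.update_of_ne hji]; exact h2 j
    refine ⟨(hPrd_iff _).mpr ⟨h0le, fun j => le_trans (hled' j) (hd'le j),
      fun S => le_trans (Finset.sum_le_sum fun j _ => hle j) (h3 S)⟩, hled', ?_⟩
    rw [Finset.sum_update_of_mem (Finset.mem_univ i), ← Finset.erase_eq]
    simp
  have hS₂subS₁ : S₂ ⊆ S₁ := by
    rintro s ⟨x, hx, rfl⟩
    obtain ⟨hmem, _, hsum⟩ := hupd0 x hx
    exact ⟨Function.update x i 0, hmem, hsum.symm⟩
  have hS₂bdd : BddAbove S₂ := hS₁bdd.mono hS₂subS₁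
  set M : ℝ := sSup S₁ with hM
  set N : ℝ := sSup S₂ with hN
  -- N is attained at xs
  have hNgreat : IsGreatest S₂ (∑ j, xs j) := by
    constructor
    · refine ⟨xs, hxsPrd, ?_⟩
      have := herase xs
      rw [hxsi] at this
      linarith
    · rintro s ⟨x, hx, rfl⟩
      obtain ⟨hmem, hled', hsum⟩ := hupd0 x hx
      obtain ⟨h1, _, h3⟩ := (hPrd_iff _).mp hmem
      rw [← hsum]
      exact hmaxQ _ ⟨h1, hled', h3⟩
  have hNval : N = ∑ j, xs j := hNgreat.csSup_eq
  have hNM : N ≤ M := csSup_le_csSup hS₁bdd hS₂ne hS₂subS₁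
  -- M ≤ N + d i
  have hMNdi : M ≤ N + d i := by
    refine csSup_le hS₁ne ?_
    rintro s ⟨z, hz, rfl⟩
    obtain ⟨h1, h2, _⟩ := (hPrd_iff z).mp hz
    have hzN : ∑ j ∈ Finset.univ.erase i, z j ≤ N := le_csSup hS₂bdd ⟨z, hz, rfl⟩
    have := herase z
    have := h2 i
    linarith
  -- key duality bound
  have hkey : ∀ x, x ∈ Prd → x i = 0 → ∀ S : Finset (Fin n), i ∈ S →
      M ≤ N + g S - ∑ j ∈ S, x j := by
    intro x hx hxi S hiS
    obtain ⟨hx1, hx2, hx3⟩ := (hPrd_iff x).mp hx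
    have hxd' : ∀ j, x j ≤ d' j := by
      intro j
      rcases eq_or_ne j i with rfl | hji
      · simp [hd'def, hxi]
      · simp [hd'def, Function.update_of_ne hji]; exact hx2 j
    refine csSup_le hS₁ne ?_
    rintro s ⟨z, hz, rfl⟩
    obtain ⟨hz1, hz2, hz3⟩ := (hPrd_iff z).mp hz
    have A1 : ∑ j ∈ (S ∪ T), z j + ∑ j ∈ (S ∪ T)ᶜ, z j = ∑ j, z j :=
      Finset.sum_add_sum_compl _ z
    have A2 : ∑ j ∈ (S ∪ T), z j ≤ g (S ∪ T) := hz3 _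
    have A3 : ∑ j ∈ (S ∪ T)ᶜ, z j ≤ ∑ j ∈ (S ∪ T)ᶜ, d' j := by
      refine Finset.sum_le_sum fun j hj => ?_
      have hji : j ≠ i := by
        intro h
        subst h
        exact (Finset.mem_compl.mp hj) (Finset.mem_union_left _ hiS)
      calc z j ≤ d j := hz2 j
        _ = d' j := by simp [hd'def, Function.update_of_ne hji]
    have A4 : ∑ j ∈ Tᶜ, d' j = ∑ j ∈ (S ∪ T)ᶜ, d' j + ∑ j ∈ S \ T, d' j := by
      have hdisj : Disjoint ((S ∪ T)ᶜ) (S \ T) := by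
        rw [Finset.disjoint_left]
        intro a ha ha'
        exact (Finset.mem_compl.mp ha)
          (Finset.mem_union_left _ (Finset.mem_sdiff.mp ha').1)
      have hun : Tᶜ = (S ∪ T)ᶜ ∪ (S \ T) := by
        ext a
        simp only [Finset.mem_compl, Finset.mem_union, Finset.mem_sdiff]
        tauto
      rw [hun, Finset.sum_union hdisj]
    have A5 := hgsub S T
    have A6 : ∑ j ∈ S ∩ T, x j ≤ g (S ∩ T) := hx3 _
    have A7 : ∑ j ∈ S \ T, x j ≤ ∑ j ∈ S \ T, d' j :=
      Finset.sum_le_sum fun j _ => hxd' j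
    have A8 : ∑ j ∈ S ∩ T, x j + ∑ j ∈ S \ T, x j = ∑ j ∈ S, x j :=
      Finset.sum_inter_add_sum_sdiff S T x
    linarith [hTval, hNval]
  -- the candidate value
  have hMNnonneg : 0 ≤ M - N := by linarith
  -- (b) membership
  have hmem : (M - N) ∈ {a : ℝ | 0 ≤ a ∧
      {y : Fin n → ℝ | Function.update y i a ∈ Prd}
        = {y : Fin n → ℝ | Function.update y i 0 ∈ Prd}} := by
    refine ⟨hMNnonneg, ?_⟩
    ext y
    simp only [Set.mem_setOf_eq]
    constructor
    · intro h
      obtain ⟨h1, h2, h3⟩ := (hPrd_iff _).mp h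
      refine (hPrd_iff _).mpr ⟨fun j => ?_, fun j => ?_, fun S => ?_⟩
      · rcases eq_or_ne j i with rfl | hji
        · simp
        · simpa [Function.update_of_ne hji] using h1 j
      · rcases eq_or_ne j i with rfl | hji
        · simp [hd j]
        · simpa [Function.update_of_ne hji] using h2 j
      · refine le_trans (Finset.sum_le_sum fun j _ => ?_) (h3 S)
        rcases eq_or_ne j i with rfl | hji
        · simp [hMNnonneg]
        · simp [Function.update_of_ne hji]
    · intro h
      obtain ⟨h1, h2, h3⟩ := (hPrd_iff _).mp h
      have hupdi : Function.update y i (0:ℝ) i = 0 := by simp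
      refine (hPrd_iff _).mpr ⟨fun j => ?_, fun j => ?_, fun S => ?_⟩
      · rcases eq_or_ne j i with rfl | hji
        · simp [hMNnonneg]
        · simpa [Function.update_of_ne hji] using h1 j
      · rcases eq_or_ne j i with rfl | hji
        · simp; linarith [hMNdi]
        · simpa [Function.update_of_ne hji] using h2 j
      · rcases Finset.decidableMem i S with hiS | hiS
        · -- i ∉ S : sums agree with update y i 0
          have : ∑ j ∈ S, Function.update y i (M - N) j
              = ∑ j ∈ S, Function.update y i 0 j := by
            refine Finset.sum_congr rfl fun j hj => ?_
            have hji : j ≠ i := fun hh => hiS (hh ▸ hj)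
            simp [Function.update_of_ne hji]
          rw [this]; exact h3 S
        · have hk := hkey (Function.update y i 0) h hupdi S hiS
          have e1 : ∑ j ∈ S, Function.update y i (M - N) j
              = (M - N) + ∑ j ∈ S.erase i, y j := by
            rw [Finset.sum_update_of_mem hiS, ← Finset.erase_eq]
          have e2 : ∑ j ∈ S, Function.update y i (0:ℝ) j
              = 0 + ∑ j ∈ S.erase i, y j := by
            rw [Finset.sum_update_of_mem hiS, ← Finset.erase_eq]
          simp only [hg] at hk
          rw [e1]
          rw [e2] at hk
          simp only [hg]
          linarith
  -- (a) upper bound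
  have hub : ∀ a ∈ {a : ℝ | 0 ≤ a ∧
      {y : Fin n → ℝ | Function.update y i a ∈ Prd}
        = {y : Fin n → ℝ | Function.update y i 0 ∈ Prd}}, a ≤ M - N := by
    rintro a ⟨ha0, haeq⟩
    have hxs_rhs : xs ∈ {y : Fin n → ℝ | Function.update y i 0 ∈ Prd} := by
      have : Function.update xs i 0 = xs := by
        rw [← hxsi]; exact Function.update_eq_self i xs
      simpa [Set.mem_setOf_eq, this] using hxsPrd
    have hxs_lhs : Function.update xs i a ∈ Prd := by
      have := haeq ▸ hxs_rhs
      exact this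
    have hsum : ∑ j, Function.update xs i a j = a + ∑ j ∈ Finset.univ.erase i, xs j := by
      rw [Finset.sum_update_of_mem (Finset.mem_univ i), ← Finset.erase_eq]
    have hNer : ∑ j ∈ Finset.univ.erase i, xs j = N := by
      have := herase xs
      rw [hxsi] at this
      rw [hNval]; linarith
    have hle : ∑ j, Function.update xs i a j ≤ M :=
      le_csSup hS₁bdd ⟨_, hxs_lhs, rfl⟩
    rw [hsum, hNer] at hle
    linarith
  exact IsGreatest.csSup_eq ⟨hmem, hub⟩
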